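/- Double robustness (outcome-consistent case): in the bias decomposition of the one-step variance estimator, if Q̄ₙ(·,1) = Q̄(·,1) and Q̄ₙ²(·,1) = Q̄²(·,1) almost surely and μₙ = μ(1), then the bias is exactly zero regardless of the choice of gₙ (provided gₙ(W) > 0 a.s.). -/
import Mathlib

open MeasureTheory ProbabilityTheory

/-- Double robustness (outcome-consistent case): in the bias decomposition of the one-step
variance estimator, if `Q̄ₙ(·,1) = Q̄(·,1)` and `Q̄ₙ²(·,1) = Q̄²(·,1)` almost surely and
`μₙ = μ(1)`, then the bias is exactly zero regardless of the choice of `gₙ` (provided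
`gₙ(W) > 0` a.s.). -/
theorem stmt_10 {Ω 𝓦 : Type*} [MeasurableSpace Ω] [MeasurableSpace 𝓦]
    (μ : Measure Ω) [IsProbabilityMeasure μ]
    (W : Ω → 𝓦) (g gn Q1 Q2 Qn1 Qn2 : 𝓦 → ℝ) (μn : ℝ)
    (hgn : ∀ᵐ ω ∂μ, 0 < gn (W ω))
    (hQ1 : ∀ᵐ ω ∂μ, Qn1 (W ω) = Q1 (W ω))
    (hQ2 : ∀ᵐ ω ∂μ, Qn2 (W ω) = Q2 (W ω))
    (hμn : μn = ∫ ω, Q1 (W ω) ∂μ) :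
    (∫ ω, ((g (W ω) - gn (W ω)) / gn (W ω) * (Q2 (W ω) - Qn2 (W ω))
        + 2 * μn * ((g (W ω) - gn (W ω)) / gn (W ω)) * (Qn1 (W ω) - Q1 (W ω))) ∂μ)
      + (μn - ∫ ω, Q1 (W ω) ∂μ) ^ 2 = 0 := by
  have h : ∫ ω, ((g (W ω) - gn (W ω)) / gn (W ω) * (Q2 (W ω) - Qn2 (W ω))
        + 2 * μn * ((g (W ω) - gn (W ω)) / gn (W ω)) * (Qn1 (W ω) - Q1 (W ω))) ∂μ
      = ∫ _ω, (0:ℝ) ∂μ := by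
    refine integral_congr_ae ?_
    filter_upwards [hQ1, hQ2] with ω h1 h2
    rw [h1, h2]; ring
  rw [h, hμn]; simp
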